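/- Let A be an element of the parabolic subgroup P, and let a > 0 be the real number with A e_0 = a e_0. Then there exist a row vector b ∈ ℝ^n and m ∈ O(h) such that A = p(a,b,m); that is, every element of P has the block form with rows [[a, b, c], [0, m, d], [0, 0, a^{-1}]] where c = −(2a)^{-1} b h^{-1} bᵀ and d = −a^{-1} m h^{-1} bᵀ. -/

import Mathlib

open Matrix

noncomputable section

abbrev Idx (p q : ℕ) : Type := Unit ⊕ (Fin (p + q)) ⊕ Unit

/-- The diagonal quadratic form of signature `(p,q)` on `ℝ^n`, `n = p + q`. -/
def hMat (p q : ℕ) : Matrix (Fin (p + q)) (Fin (p + q)) ℝ :=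
  Matrix.diagonal fun i => if (i : ℕ) < p then (1 : ℝ) else -1

/-- The quadratic form of signature `(p+1,q+1)` on `ℝ^{n+2}`, in block form
`[[0,0,1],[0,h,0],[1,0,0]]`. -/
def htMat (p q : ℕ) : Matrix (Idx p q) (Idx p q) ℝ :=
  Matrix.of fun I J =>
    match I, J with
    | Sum.inl _, Sum.inr (Sum.inr _) => (1 : ℝ)
    | Sum.inr (Sum.inr _), Sum.inl _ => 1
    | Sum.inr (Sum.inl i), Sum.inr (Sum.inl j) => hMat p q i j
    | _, _ => 0

/-- The first standard basis vector `e₀` of `ℝ^{n+2}`. -/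
def e0 (p q : ℕ) : Idx p q → ℝ := fun I =>
  match I with
  | Sum.inl _ => 1
  | _ => 0

/-- `c = -(2a)⁻¹ b h⁻¹ bᵀ`. -/
def cVal (p q : ℕ) (a : ℝ) (b : Fin (p + q) → ℝ) : ℝ :=
  -(2 * a)⁻¹ * (b ⬝ᵥ ((hMat p q)⁻¹ *ᵥ b))

/-- `d = -a⁻¹ m h⁻¹ bᵀ`. -/
def dVec (p q : ℕ) (a : ℝ) (b : Fin (p + q) → ℝ)
    (m : Matrix (Fin (p + q)) (Fin (p + q)) ℝ) : Fin (p + q) → ℝ :=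
  (-a⁻¹) • (m *ᵥ ((hMat p q)⁻¹ *ᵥ b))

/-- The element `p(a,b,m)` of the parabolic subgroup, in block form
`[[a,b,c],[0,m,d],[0,0,a⁻¹]]`. -/
def pMat (p q : ℕ) (a : ℝ) (b : Fin (p + q) → ℝ)
    (m : Matrix (Fin (p + q)) (Fin (p + q)) ℝ) : Matrix (Idx p q) (Idx p q) ℝ :=
  Matrix.of fun I J =>
    match I, J with
    | Sum.inl _, Sum.inl _ => a
    | Sum.inl _, Sum.inr (Sum.inl j) => b j
    | Sum.inl _, Sum.inr (Sum.inr _) => cVal p q a b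
    | Sum.inr (Sum.inl i), Sum.inr (Sum.inl j) => m i j
    | Sum.inr (Sum.inl i), Sum.inr (Sum.inr _) => dVec p q a b m i
    | Sum.inr (Sum.inr _), Sum.inr (Sum.inr _) => a⁻¹
    | _, _ => 0

/-- `|x|² = xᵀ h x`. -/
def normSq (p q : ℕ) (x : Fin (p + q) → ℝ) : ℝ := x ⬝ᵥ (hMat p q *ᵥ x)

/-- The denominator `D(x) = a + b x - ½ c |x|²`. -/
def Dden (p q : ℕ) (a : ℝ) (b x : Fin (p + q) → ℝ) : ℝ :=
  a + b ⬝ᵥ x - (1 / 2) * cVal p q a b * normSq p q x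

/-- The conformal transformation `φ(x) = (m x - ½|x|² d)/D(x)`. -/
def phiMap (p q : ℕ) (a : ℝ) (b : Fin (p + q) → ℝ)
    (m : Matrix (Fin (p + q)) (Fin (p + q)) ℝ) (x : Fin (p + q) → ℝ) :
    Fin (p + q) → ℝ :=
  (Dden p q a b x)⁻¹ • (m *ᵥ x - ((1 / 2) * normSq p q x) • dVec p q a b m)

/-- The conformal factor `Ω(x) = D(x)⁻¹`. -/
def OmegaFn (p q : ℕ) (a : ℝ) (b : Fin (p + q) → ℝ) (x : Fin (p + q) → ℝ) : ℝ :=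
  (Dden p q a b x)⁻¹

/-- Jacobian matrix of a map at a point: `J i j = ∂ⱼ φⁱ (x)`. -/
def jacobianAt (p q : ℕ) (φ : (Fin (p + q) → ℝ) → (Fin (p + q) → ℝ))
    (x : Fin (p + q) → ℝ) : Matrix (Fin (p + q)) (Fin (p + q)) ℝ :=
  Matrix.of fun i j => fderiv ℝ φ x (Pi.single j 1) i

/-- Row vector of partial derivatives of a scalar function at a point. -/
def gradAt (p q : ℕ) (f : (Fin (p + q) → ℝ) → ℝ) (x : Fin (p + q) → ℝ) :
    Fin (p + q) → ℝ :=
  fun j => fderiv ℝ f x (Pi.single j 1)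

/-- Every element of the parabolic subgroup `P` has the block form `p(a,b,m)`
with `b ∈ ℝⁿ` a row vector and `m ∈ O(h)`. -/
theorem statement0 (p q : ℕ) (hn : 3 ≤ p + q)
    (A : Matrix (Idx p q) (Idx p q) ℝ)
    (hA : Aᵀ * htMat p q * A = htMat p q)
    (a : ℝ) (ha : 0 < a) (hAe : A *ᵥ e0 p q = a • e0 p q) :
    ∃ (b : Fin (p + q) → ℝ) (m : Matrix (Fin (p + q)) (Fin (p + q)) ℝ),
      mᵀ * hMat p q * m = hMat p q ∧ A = pMat p q a b m := by
  classical
  have ha' : a ≠ 0 := ne_of_gt ha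
  -- the universal bilinear identity from hA
  have key : ∀ I J : Idx p q,
      A (Sum.inl ()) I * A (Sum.inr (Sum.inr ())) J
        + A (Sum.inr (Sum.inr ())) I * A (Sum.inl ()) J
        + ∑ k : Fin (p + q), (if (k : ℕ) < p then (1:ℝ) else -1)
            * (A (Sum.inr (Sum.inl k)) I * A (Sum.inr (Sum.inl k)) J)
      = htMat p q I J := by
    intro I J
    have h := congrFun (congrFun hA I) J
    simp only [Matrix.mul_apply, Matrix.transpose_apply, htMat, hMat, Matrix.of_apply,
      Matrix.diagonal, Fintype.sum_sum_type, Finset.univ_unique, Finset.sum_singleton,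
      Finset.sum_mul, Finset.mul_sum] at h
    simp only [mul_zero, zero_mul, mul_one, one_mul, zero_add, add_zero, mul_ite, ite_mul,
      Finset.sum_ite_eq, Finset.sum_ite_eq', Finset.mem_univ, if_true,
      Finset.sum_const_zero] at h
    have hs : ∑ k : Fin (p+q), (if (k : ℕ) < p then (1:ℝ) else -1)
          * (A (Sum.inr (Sum.inl k)) I * A (Sum.inr (Sum.inl k)) J)
        = ∑ x : Fin (p+q), (if (x:ℕ) < p then A (Sum.inr (Sum.inl x)) I * A (Sum.inr (Sum.inl x)) J
            else A (Sum.inr (Sum.inl x)) I * -1 * A (Sum.inr (Sum.inl x)) J) :=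
      Finset.sum_congr rfl (fun k _ => by split <;> ring)
    rw [hs]
    simp only [htMat, hMat, Matrix.diagonal, Matrix.of_apply]
    linear_combination h
  -- column 0 of A
  have hcol : ∀ I, A I (Sum.inl ()) = a * e0 p q I := by
    intro I
    have h := congrFun hAe I
    simpa [Matrix.mulVec, dotProduct, Fintype.sum_sum_type, e0, Pi.smul_apply,
      Finset.univ_unique, Finset.sum_singleton] using h
  have h00 : A (Sum.inl ()) (Sum.inl ()) = a := by simpa [e0] using hcol (Sum.inl ())
  have hi0 : ∀ i, A (Sum.inr (Sum.inl i)) (Sum.inl ()) = 0 := fun i => by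
    simpa [e0] using hcol (Sum.inr (Sum.inl i))
  have hinf0 : A (Sum.inr (Sum.inr ())) (Sum.inl ()) = 0 := by
    simpa [e0] using hcol (Sum.inr (Sum.inr ()))
  -- names for the blocks
  set b : Fin (p+q) → ℝ := fun j => A (Sum.inl ()) (Sum.inr (Sum.inl j)) with hbdef
  set m : Matrix (Fin (p+q)) (Fin (p+q)) ℝ :=
      Matrix.of fun i j => A (Sum.inr (Sum.inl i)) (Sum.inr (Sum.inl j)) with hmdef
  set d : Fin (p+q) → ℝ := fun i => A (Sum.inr (Sum.inl i)) (Sum.inr (Sum.inr ())) with hddef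
  set c : ℝ := A (Sum.inl ()) (Sum.inr (Sum.inr ())) with hcdef
  -- last row vanishes in the middle
  have he : ∀ j, A (Sum.inr (Sum.inr ())) (Sum.inr (Sum.inl j)) = 0 := by
    intro j
    have h := key (Sum.inl ()) (Sum.inr (Sum.inl j))
    simp only [h00, hi0, hinf0, htMat, Matrix.of_apply, mul_zero, zero_mul, add_zero,
      zero_add, Finset.sum_const_zero] at h
    exact (mul_eq_zero.mp h).resolve_left ha'
  have hf : A (Sum.inr (Sum.inr ())) (Sum.inr (Sum.inr ())) = a⁻¹ := by
    have h := key (Sum.inl ()) (Sum.inr (Sum.inr ()))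
    simp only [h00, hi0, hinf0, htMat, Matrix.of_apply, mul_zero, zero_mul, add_zero,
      zero_add, Finset.sum_const_zero] at h
    field_simp at h ⊢
    linarith [h]
  -- equation (4): orthogonality of m
  have eq4 : ∀ i j, ∑ k : Fin (p+q), (if (k : ℕ) < p then (1:ℝ) else -1)
      * (m k i * m k j) = hMat p q i j := by
    intro i j
    have h := key (Sum.inr (Sum.inl i)) (Sum.inr (Sum.inl j))
    simp only [he, htMat, Matrix.of_apply, mul_zero, zero_mul, add_zero, zero_add] at h
    simpa [hmdef] using h
  have hm : mᵀ * hMat p q * m = hMat p q := by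
    ext i j
    have hcalc : (mᵀ * hMat p q * m) i j
        = ∑ k : Fin (p+q), (if (k : ℕ) < p then (1:ℝ) else -1) * (m k i * m k j) := by
      simp only [Matrix.mul_apply, Matrix.transpose_apply, hMat, Matrix.diagonal,
        Matrix.of_apply, Finset.sum_mul, mul_ite, ite_mul, mul_zero, zero_mul,
        Finset.sum_ite_eq, Finset.sum_ite_eq', Finset.mem_univ, if_true]
      exact Finset.sum_congr rfl (fun k _ => by split <;> ring)
    rw [hcalc, eq4]
  -- h is its own inverse
  have hh1 : hMat p q * hMat p q = 1 := by
    ext i j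
    simp only [hMat, Matrix.diagonal_mul_diagonal, Matrix.diagonal_apply, Matrix.one_apply]
    by_cases hij : i = j <;> simp [hij] <;> split <;> norm_num
  have hinv : (hMat p q)⁻¹ = hMat p q := Matrix.inv_eq_right_inv hh1
  have hhT : (hMat p q)ᵀ = hMat p q := by rw [hMat, Matrix.diagonal_transpose]
  -- m * h * mᵀ * h = 1
  have hmh : m * hMat p q * mᵀ * hMat p q = 1 := by
    have hleft : (hMat p q * mᵀ * hMat p q) * m = 1 := by
      calc (hMat p q * mᵀ * hMat p q) * m = hMat p q * (mᵀ * hMat p q * m) := by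
            noncomm_ring
        _ = 1 := by rw [hm, hh1]
    have := mul_eq_one_comm.mp hleft
    calc m * hMat p q * mᵀ * hMat p q = m * (hMat p q * mᵀ * hMat p q) := by noncomm_ring
      _ = 1 := this
  -- equation (5) in vector form
  have eq5 : mᵀ *ᵥ (hMat p q *ᵥ d) = (-a⁻¹) • b := by
    funext i
    have h := key (Sum.inr (Sum.inl i)) (Sum.inr (Sum.inr ()))
    simp only [he, hf, htMat, Matrix.of_apply, mul_zero, zero_mul, add_zero, zero_add] at h
    have hL : (mᵀ *ᵥ (hMat p q *ᵥ d)) i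
        = ∑ k : Fin (p+q), (if (k : ℕ) < p then (1:ℝ) else -1) * (m k i * d k) := by
      simp only [Matrix.mulVec, dotProduct, Matrix.transpose_apply, hMat, Matrix.diagonal,
        Matrix.of_apply, ite_mul, zero_mul, Finset.sum_ite_eq, Finset.sum_ite_eq',
        Finset.mem_univ, if_true]
      exact Finset.sum_congr rfl (fun k _ => by split <;> ring)
    rw [hL]
    have hsum : ∑ k : Fin (p+q), (if (k : ℕ) < p then (1:ℝ) else -1) * (m k i * d k)
        = ∑ k : Fin (p+q), (if (k : ℕ) < p then (1:ℝ) else -1)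
            * (A (Sum.inr (Sum.inl k)) (Sum.inr (Sum.inl i)) * A (Sum.inr (Sum.inl k)) (Sum.inr (Sum.inr ()))) := by
      exact Finset.sum_congr rfl (fun k _ => by simp [hmdef, hddef])
    rw [hsum]
    simp only [Pi.smul_apply, smul_eq_mul]
    have hbi : b i = A (Sum.inl ()) (Sum.inr (Sum.inl i)) := rfl
    rw [hbi]
    linarith [h]
  -- identify d
  have hd_eq : d = (-a⁻¹) • (m *ᵥ (hMat p q *ᵥ b)) := by
    have h1 : (m * hMat p q) *ᵥ (mᵀ *ᵥ (hMat p q *ᵥ d)) = d := by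
      rw [Matrix.mulVec_mulVec, Matrix.mulVec_mulVec]
      have : m * hMat p q * mᵀ * hMat p q = 1 := hmh
      rw [show (m * hMat p q * mᵀ) * hMat p q = 1 from this, Matrix.one_mulVec]
    rw [eq5] at h1
    rw [← h1, Matrix.mulVec_smul, ← Matrix.mulVec_mulVec]
  -- invariance of the quadratic form under m
  have key2 : ∀ u : Fin (p+q) → ℝ,
      (m *ᵥ u) ⬝ᵥ (hMat p q *ᵥ (m *ᵥ u)) = u ⬝ᵥ (hMat p q *ᵥ u) := by
    intro u
    rw [Matrix.mulVec_mulVec, Matrix.dotProduct_mulVec, ← Matrix.vecMul_transpose,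
      Matrix.vecMul_vecMul, ← mul_assoc, hm, ← Matrix.mulVec_transpose, hhT,
      dotProduct_comm]
  -- identify c
  have hc : c = cVal p q a b := by
    have h := key (Sum.inr (Sum.inr ())) (Sum.inr (Sum.inr ()))
    simp only [hf, htMat, Matrix.of_apply] at h
    have hS : ∑ k : Fin (p+q), (if (k : ℕ) < p then (1:ℝ) else -1)
        * (A (Sum.inr (Sum.inl k)) (Sum.inr (Sum.inr ())) * A (Sum.inr (Sum.inl k)) (Sum.inr (Sum.inr ())))
        = d ⬝ᵥ (hMat p q *ᵥ d) := by
      simp only [dotProduct, Matrix.mulVec, hMat, Matrix.diagonal, Matrix.of_apply,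
        ite_mul, zero_mul, Finset.sum_ite_eq, Finset.sum_ite_eq', Finset.mem_univ, if_true]
      exact Finset.sum_congr rfl (fun k _ => by simp only [hddef]; split <;> ring)
    rw [hS] at h
    have hdd : d ⬝ᵥ (hMat p q *ᵥ d) = (a⁻¹ * a⁻¹) * (b ⬝ᵥ (hMat p q *ᵥ b)) := by
      rw [hd_eq]
      rw [Matrix.mulVec_smul, smul_dotProduct, dotProduct_smul]
      rw [key2 (hMat p q *ᵥ b)]
      rw [Matrix.mulVec_mulVec, hh1, Matrix.one_mulVec]
      have : (hMat p q *ᵥ b) ⬝ᵥ b = b ⬝ᵥ (hMat p q *ᵥ b) := dotProduct_comm _ _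
      rw [this]
      simp only [smul_eq_mul]
      ring
    rw [hdd] at h
    rw [hcdef, cVal, hinv]
    have h5 : (A (Sum.inl ()) (Sum.inr (Sum.inr ())) * (2*a) + b ⬝ᵥ (hMat p q *ᵥ b)) * a = 0 := by
      field_simp at h
      linear_combination a * h
    have h6 := (mul_eq_zero.mp h5).resolve_right ha'
    field_simp
    linarith [h6]
  -- assemble
  refine ⟨b, m, hm, ?_⟩
  ext I J
  match I, J with
  | Sum.inl (), Sum.inl () => simpa [pMat] using h00
  | Sum.inl (), Sum.inr (Sum.inl j) => simp [pMat, hbdef]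
  | Sum.inl (), Sum.inr (Sum.inr ()) => simpa [pMat] using hc
  | Sum.inr (Sum.inl i), Sum.inl () => simpa [pMat] using hi0 i
  | Sum.inr (Sum.inl i), Sum.inr (Sum.inl j) => simp [pMat, hmdef]
  | Sum.inr (Sum.inl i), Sum.inr (Sum.inr ()) =>
      have : d i = dVec p q a b m i := by rw [hd_eq, dVec, hinv]
      simpa [pMat, hddef] using this
  | Sum.inr (Sum.inr ()), Sum.inl () => simpa [pMat] using hinf0
  | Sum.inr (Sum.inr ()), Sum.inr (Sum.inl j) => simpa [pMat] using he j
  | Sum.inr (Sum.inr ()), Sum.inr (Sum.inr ()) => simpa [pMat] using hf
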